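/- For every real number w > 0, one has 0 < I₁(w)/I₀(w) < min(w/2, 1); equivalently, the derivative of log I₀ satisfies 0 < (log I₀)'(w) < min(w/2, 1). -/

import Mathlib

open Real

/-- The modified Bessel function of the first kind of order zero,
`I0(w) = sum_k w^(2k) / (4^k (k!)^2)`. -/
noncomputable def besselI0 (w : ℝ) : ℝ :=
  ∑' k : ℕ, w ^ (2 * k) / (4 ^ k * (k.factorial : ℝ) ^ 2)

/-- The modified Bessel function of the first kind of order one (the derivative of `besselI0`),
`I1(w) = sum_k w^(2k+1) / (2^(2k+1) k! (k+1)!)`. -/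
noncomputable def besselI1 (w : ℝ) : ℝ :=
  ∑' k : ℕ, w ^ (2 * k + 1) / (2 ^ (2 * k + 1) * (k.factorial : ℝ) * ((k + 1).factorial : ℝ))

/-- For every `w > 0`, `0 < I1(w)/I0(w) < min (w/2) 1`. -/
theorem besselI1_div_besselI0_pos_lt_min (w : ℝ) (hw : 0 < w) :
    0 < besselI1 w / besselI0 w ∧ besselI1 w / besselI0 w < min (w / 2) 1 := by
  set x := w / 2 with hxdef
  have hx0 : 0 < x := by positivity
  set u : ℕ → ℝ := fun k => x ^ k / k.factorial with hu
  have hu0 : ∀ k, 0 < u k := fun k => by positivity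
  have hwx : w = 2 * x := by rw [hxdef]; ring
  have hfact : ∀ k : ℕ, (0:ℝ) < (k.factorial : ℝ) := fun k => by
    exact_mod_cast k.factorial_pos
  -- rewrite I0 as sum of squares
  have hI0 : besselI0 w = ∑' k, u k * u k := by
    unfold besselI0
    congr 1; funext k
    have h4 : (4:ℝ) ^ k = 2 ^ (2 * k) := by
      rw [pow_mul]; norm_num
    rw [hwx, mul_pow, h4]
    have := (hfact k).ne'
    field_simp [hu]
    rw [hu]
    field_simp
    ring
  -- rewrite I1
  have hI1 : besselI1 w = ∑' k, u k * u (k + 1) := by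
    unfold besselI1
    congr 1; funext k
    rw [hwx, mul_pow]
    have h1 := (hfact k).ne'
    have h2 := (hfact (k + 1)).ne'
    field_simp [hu]
    rw [hu]
    field_simp
    ring
  -- summability
  have hle_sq : ∀ k, u k * u k ≤ (x ^ 2) ^ k / k.factorial := by
    intro k
    have h1 : u k ≤ x ^ k := by
      rw [hu]
      exact div_le_self (by positivity) (by exact_mod_cast k.factorial_pos)
    calc u k * u k ≤ (x ^ k / k.factorial) * x ^ k := by
          exact mul_le_mul_of_nonneg_left h1 (hu0 k).le
      _ = (x ^ 2) ^ k / k.factorial := by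
          rw [← pow_mul]; ring_nf
  have hsum_sq : Summable (fun k => u k * u k) :=
    Summable.of_nonneg_of_le (fun k => by positivity) hle_sq
      (Real.summable_pow_div_factorial (x ^ 2))
  have hle_mix : ∀ k, u k * u (k + 1) ≤ x * ((x ^ 2) ^ k / k.factorial) := by
    intro k
    have h1 : u (k + 1) ≤ x ^ (k + 1) := by
      rw [hu]
      exact div_le_self (by positivity) (by exact_mod_cast (k+1).factorial_pos)
    calc u k * u (k + 1) ≤ (x ^ k / k.factorial) * x ^ (k + 1) := by
          exact mul_le_mul_of_nonneg_left h1 (hu0 k).le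
      _ = x * ((x ^ 2) ^ k / k.factorial) := by
          rw [← pow_mul]; field_simp; ring
  have hsum_mix : Summable (fun k => u k * u (k + 1)) :=
    Summable.of_nonneg_of_le (fun k => by positivity) hle_mix
      ((Real.summable_pow_div_factorial (x ^ 2)).mul_left x)
  -- I0 ≥ 1
  have hu0one : u 0 = 1 := by simp [hu]
  have hI0ge : 1 ≤ besselI0 w := by
    rw [hI0]
    have := Summable.le_tsum hsum_sq 0 (fun i _ => (mul_pos (hu0 i) (hu0 i)).le)
    simpa [hu0one] using this
  have hI0pos : 0 < besselI0 w := lt_of_lt_of_le one_pos hI0ge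
  -- I1 > 0
  have hI1pos : 0 < besselI1 w := by
    rw [hI1]
    exact Summable.tsum_pos hsum_mix (fun k => (mul_pos (hu0 k) (hu0 k.succ)).le) 0
      (mul_pos (hu0 0) (hu0 1))
  -- I1 < x * I0
  have hshift : ∀ k : ℕ, u (k + 1) = x * u k / (k + 1) := by
    intro k
    rw [hu]
    simp only [Nat.factorial_succ, pow_succ]
    push_cast
    have h1 := (hfact k).ne'
    have h2 : ((k:ℝ) + 1) ≠ 0 := by positivity
    field_simp
  have hlt_half : besselI1 w < x * besselI0 w := by
    rw [hI1, hI0, ← tsum_mul_left]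
    refine Summable.tsum_lt_tsum (i := 1) (fun k => ?_) ?_ ?_ (hsum_sq.mul_left x)
    · rw [hshift k]
      have hk1 : (1:ℝ) ≤ (k:ℝ) + 1 := by
        have := (Nat.cast_nonneg k : (0:ℝ) ≤ k); linarith
      calc u k * (x * u k / ((k:ℝ) + 1)) = x * (u k * u k) / ((k:ℝ) + 1) := by ring
        _ ≤ x * (u k * u k) := div_le_self (by positivity) hk1
    · rw [hshift 1]
      have h1 := hu0 1
      calc u 1 * (x * u 1 / ((1:ℕ) + 1)) = x * (u 1 * u 1) / 2 := by push_cast; ring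
        _ < x * (u 1 * u 1) := by
            have hpos : 0 < x * (u 1 * u 1) := by positivity
            linarith
    · exact hsum_mix
  -- I1 < I0 via AM-GM
  have hsum_shift : Summable (fun k => u (k + 1) * u (k + 1)) := by
    have := hsum_sq
    rwa [← summable_nat_add_iff 1] at this
  have hlt_one : besselI1 w < besselI0 w := by
    have hle : besselI1 w ≤ (besselI0 w + (besselI0 w - 1)) / 2 := by
      rw [hI1, hI0]
      have hterm : ∀ k, u k * u (k + 1) ≤ (u k * u k + u (k + 1) * u (k + 1)) / 2 := by
        intro k
        nlinarith [sq_nonneg (u k - u (k + 1))]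
      have hsumR : Summable (fun k => (u k * u k + u (k + 1) * u (k + 1)) / 2) :=
        (hsum_sq.add hsum_shift).div_const 2
      have h1 : besselI1 w ≤ ∑' k, (u k * u k + u (k + 1) * u (k + 1)) / 2 := by
        rw [hI1]
        exact Summable.tsum_le_tsum hterm hsum_mix hsumR
      have h2 : ∑' k, (u k * u k + u (k + 1) * u (k + 1)) / 2
          = ((∑' k, u k * u k) + ∑' k, u (k + 1) * u (k + 1)) / 2 := by
        rw [tsum_div_const, Summable.tsum_add hsum_sq hsum_shift]
      have h3 : ∑' k, u (k + 1) * u (k + 1) = (∑' k, u k * u k) - 1 := by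
        have := Summable.tsum_eq_zero_add hsum_sq
        rw [hu0one] at this
        linarith [this]
      rw [hI1] at h1
      linarith
    linarith
  refine ⟨div_pos hI1pos hI0pos, lt_min ?_ ?_⟩
  · rw [div_lt_iff₀ hI0pos]
    exact hlt_half
  · exact (div_lt_one hI0pos).2 hlt_one
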